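/- Let ρ₊, ρ₋ ∈ [0,1) with ρ₊ + ρ₋ < 1, and let φ : ℝ → ℝ be any function. Define the modified loss φ̃(y, t) = ((1 - ρ_{-y})·φ(y·t) - ρ_y·φ(-y·t)) / (1 - ρ₊ - ρ₋) for y ∈ {+1, -1}, where ρ_{+1} = ρ₊ and ρ_{-1} = ρ₋. Suppose the observed label ỹ equals y with probability 1 - ρ_y and equals -y with probability ρ_y. Then the expectation of φ̃(ỹ, t) over the noisy label ỹ equals φ(y·t): (1 - ρ_y)·φ̃(y,t) + ρ_y·φ̃(-y,t) = φ(y·t). -/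
import Mathlib

theorem stmt_0 (ρp ρm : ℝ) (hp0 : 0 ≤ ρp) (hp1 : ρp < 1) (hm0 : 0 ≤ ρm) (hm1 : ρm < 1)
    (hsum : ρp + ρm < 1) (φ : ℝ → ℝ) (t y : ℝ) (hy : y = 1 ∨ y = -1) :
    let ρ : ℝ → ℝ := fun s => if s = 1 then ρp else ρm
    let φt : ℝ → ℝ → ℝ := fun s u =>
      ((1 - ρ (-s)) * φ (s * u) - ρ s * φ (-(s * u))) / (1 - ρp - ρm)
    (1 - ρ y) * φt y t + ρ y * φt (-y) t = φ (y * t) := by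
  intro ρ φt
  have hne : 1 - ρp - ρm ≠ 0 := by linarith
  rcases hy with h | h <;> subst h <;>
    simp only [ρ, φt] <;> norm_num <;> field_simp <;> ring
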